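/- Let $H$ be a Hopf algebra, $(H,I)$ a Dorroh pair of bialgebras, and $A=H\ltimes_d I$. Define $B=\{a\in A : (1\otimes\pi_H)\Delta(a)=a\otimes 1\}$ where $\pi_H:A\to H$ is the projection. Then $B=\{(\lambda 1_H, x) : \lambda\in k,\ x\in I^{coH}\}$, where $I^{coH}=\{x\in I : \rho_r(x)=x\otimes 1_H\}$ is the set of right $H$-coinvariants of $I$. -/

import Mathlib

open TensorProduct

/-- Coassociativity of a (not necessarily counital) comultiplication. -/
def Coassoc {k : Type*} [Field k] {V : Type*} [AddCommGroup V] [Module k V]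
    (d : V →ₗ[k] V ⊗[k] V) : Prop :=
  (TensorProduct.assoc k V V V).toLinearMap ∘ₗ TensorProduct.map d LinearMap.id ∘ₗ d
    = TensorProduct.map LinearMap.id d ∘ₗ d

/-- The Dorroh comultiplication on `H × I` for a Dorroh pair of coalgebras `(H, I)`. -/
noncomputable def dorrohComul {k : Type*} [Field k] {H I : Type*} [AddCommGroup H] [Module k H]
    [AddCommGroup I] [Module k I]
    (dH : H →ₗ[k] H ⊗[k] H) (dI : I →ₗ[k] I ⊗[k] I)
    (ρl : I →ₗ[k] H ⊗[k] I) (ρr : I →ₗ[k] I ⊗[k] H) :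
    (H × I) →ₗ[k] (H × I) ⊗[k] (H × I) :=
  TensorProduct.map (LinearMap.inl k H I) (LinearMap.inl k H I) ∘ₗ dH ∘ₗ LinearMap.fst k H I
  + TensorProduct.map (LinearMap.inl k H I) (LinearMap.inr k H I) ∘ₗ ρl ∘ₗ LinearMap.snd k H I
  + TensorProduct.map (LinearMap.inr k H I) (LinearMap.inl k H I) ∘ₗ ρr ∘ₗ LinearMap.snd k H I
  + TensorProduct.map (LinearMap.inr k H I) (LinearMap.inr k H I) ∘ₗ dI ∘ₗ LinearMap.snd k H I

/-- The Dorroh multiplication on `H × I`, as a bilinear map. -/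
def dorrohMulL {k : Type*} [Field k] {H I : Type*} [AddCommGroup H] [Module k H]
    [AddCommGroup I] [Module k I]
    (mH : H →ₗ[k] H →ₗ[k] H) (mI : I →ₗ[k] I →ₗ[k] I)
    (l : H →ₗ[k] I →ₗ[k] I) (r : I →ₗ[k] H →ₗ[k] I) :
    (H × I) →ₗ[k] (H × I) →ₗ[k] H × I :=
  LinearMap.mk₂ k (fun p q => (mH p.1 q.1, l p.1 q.2 + r p.2 q.1 + mI p.2 q.2))
    (by intro p p' q; simp [Prod.ext_iff, map_add, LinearMap.add_apply]; abel)
    (by intro c p q; simp [Prod.ext_iff, map_smul, LinearMap.smul_apply, smul_add])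
    (by intro p q q'; simp [Prod.ext_iff, map_add, LinearMap.add_apply]; abel)
    (by intro c p q; simp [Prod.ext_iff, map_smul, LinearMap.smul_apply, smul_add])

/-- The induced multiplication on `A ⊗ A`: `(a ⊗ b)(c ⊗ d) = ac ⊗ bd`. -/
noncomputable def tensorMul {k : Type*} [Field k] {A : Type*} [AddCommGroup A] [Module k A]
    (m : A →ₗ[k] A →ₗ[k] A) : (A ⊗[k] A) →ₗ[k] (A ⊗[k] A) →ₗ[k] A ⊗[k] A :=
  TensorProduct.homTensorHomMap (RingHom.id k) A A A A ∘ₗ TensorProduct.map m m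

open TensorProduct in
lemma dorrohComul_fst_aux {k : Type*} [Field k] {H I : Type*} [AddCommGroup H] [Module k H]
    [AddCommGroup I] [Module k I]
    (dH : H →ₗ[k] H ⊗[k] H) (dI : I →ₗ[k] I ⊗[k] I)
    (ρl : I →ₗ[k] H ⊗[k] I) (ρr : I →ₗ[k] I ⊗[k] H) (h : H) (x : I) :
    TensorProduct.map LinearMap.id (LinearMap.fst k H I)
      (dorrohComul dH dI ρl ρr (h, x))
    = TensorProduct.map (LinearMap.inl k H I) LinearMap.id (dH h)
      + TensorProduct.map (LinearMap.inr k H I) LinearMap.id (ρr x) := by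
  have e1 : ∀ z : H ⊗[k] H,
      TensorProduct.map LinearMap.id (LinearMap.fst k H I)
        (TensorProduct.map (LinearMap.inl k H I) (LinearMap.inl k H I) z)
      = TensorProduct.map (LinearMap.inl k H I) LinearMap.id z := fun z => by
    rw [← LinearMap.comp_apply, ← TensorProduct.map_comp]; simp
  have e2 : ∀ z : H ⊗[k] I,
      TensorProduct.map LinearMap.id (LinearMap.fst k H I)
        (TensorProduct.map (LinearMap.inl k H I) (LinearMap.inr k H I) z) = 0 := fun z => by
    rw [← LinearMap.comp_apply, ← TensorProduct.map_comp]
    simp [TensorProduct.map_zero_right]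
  have e3 : ∀ z : I ⊗[k] H,
      TensorProduct.map LinearMap.id (LinearMap.fst k H I)
        (TensorProduct.map (LinearMap.inr k H I) (LinearMap.inl k H I) z)
      = TensorProduct.map (LinearMap.inr k H I) LinearMap.id z := fun z => by
    rw [← LinearMap.comp_apply, ← TensorProduct.map_comp]; simp
  have e4 : ∀ z : I ⊗[k] I,
      TensorProduct.map LinearMap.id (LinearMap.fst k H I)
        (TensorProduct.map (LinearMap.inr k H I) (LinearMap.inr k H I) z) = 0 := fun z => by
    rw [← LinearMap.comp_apply, ← TensorProduct.map_comp]
    simp [TensorProduct.map_zero_right]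
  simp only [dorrohComul, LinearMap.add_apply, LinearMap.comp_apply, LinearMap.fst_apply,
    LinearMap.snd_apply, map_add, e1, e2, e3, e4]
  abel

theorem stmt17 {k : Type*} [Field k] {H I : Type*} [AddCommGroup H] [Module k H]
    [AddCommGroup I] [Module k I]
    (mH : H →ₗ[k] H →ₗ[k] H) (oneH : H) (dH : H →ₗ[k] H ⊗[k] H) (εH : H →ₗ[k] k)
    (SH : H →ₗ[k] H)
    (mI : I →ₗ[k] I →ₗ[k] I) (dI : I →ₗ[k] I ⊗[k] I)
    (l : H →ₗ[k] I →ₗ[k] I) (r : I →ₗ[k] H →ₗ[k] I)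
    (ρl : I →ₗ[k] H ⊗[k] I) (ρr : I →ₗ[k] I ⊗[k] H)
    -- `(H, I)` is a Dorroh pair of algebras
    (hHassoc : ∀ a b c : H, mH (mH a b) c = mH a (mH b c))
    (hIassoc : ∀ x y z : I, mI (mI x y) z = mI x (mI y z))
    (hll : ∀ (a b : H) (x : I), l (mH a b) x = l a (l b x))
    (hrr : ∀ (x : I) (a b : H), r (r x a) b = r x (mH a b))
    (hlr : ∀ (a : H) (x : I) (b : H), r (l a x) b = l a (r x b))
    (ha1 : ∀ (a : H) (x y : I), l a (mI x y) = mI (l a x) y)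
    (ha2 : ∀ (x : I) (a : H) (y : I), mI (r x a) y = mI x (l a y))
    (ha3 : ∀ (x y : I) (a : H), r (mI x y) a = mI x (r y a))
    -- `(H, I)` is a Dorroh pair of coalgebras
    (hHco : Coassoc dH) (hIco : Coassoc dI)
    (hcl : (TensorProduct.assoc k H H I).toLinearMap ∘ₗ TensorProduct.map dH LinearMap.id ∘ₗ ρl
      = TensorProduct.map LinearMap.id ρl ∘ₗ ρl)
    (hcr : TensorProduct.map LinearMap.id dH ∘ₗ ρr
      = (TensorProduct.assoc k I H H).toLinearMap ∘ₗ TensorProduct.map ρr LinearMap.id ∘ₗ ρr)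
    (hcbi : TensorProduct.map LinearMap.id ρr ∘ₗ ρl
      = (TensorProduct.assoc k H I H).toLinearMap ∘ₗ TensorProduct.map ρl LinearMap.id ∘ₗ ρr)
    (hc1 : TensorProduct.map LinearMap.id ρr ∘ₗ dI
      = (TensorProduct.assoc k I I H).toLinearMap ∘ₗ TensorProduct.map dI LinearMap.id ∘ₗ ρr)
    (hc2 : (TensorProduct.assoc k H I I).toLinearMap ∘ₗ TensorProduct.map ρl LinearMap.id ∘ₗ dI
      = TensorProduct.map LinearMap.id dI ∘ₗ ρl)
    (hc3 : (TensorProduct.assoc k I H I).toLinearMap ∘ₗ TensorProduct.map ρr LinearMap.id ∘ₗ dI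
      = TensorProduct.map LinearMap.id ρl ∘ₗ dI)
    -- `H` is a Hopf algebra with antipode `SH`
    (hone : ∀ a : H, mH oneH a = a ∧ mH a oneH = a)
    (hεcounit : ∀ a : H,
      (TensorProduct.lid k H) (TensorProduct.map εH LinearMap.id (dH a)) = a ∧
      (TensorProduct.rid k H) (TensorProduct.map LinearMap.id εH (dH a)) = a)
    (hdHmul : ∀ a b : H, dH (mH a b) = tensorMul mH (dH a) (dH b))
    (hdHone : dH oneH = oneH ⊗ₜ[k] oneH)
    (hεHmul : ∀ a b : H, εH (mH a b) = εH a * εH b) (hεHone : εH oneH = 1)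
    (hSH : ∀ a : H,
      TensorProduct.lift mH (TensorProduct.map SH LinearMap.id (dH a)) = εH a • oneH ∧
      TensorProduct.lift mH (TensorProduct.map LinearMap.id SH (dH a)) = εH a • oneH)
    -- `H ⋉ I` is a bialgebra with identity `(1,0)` and counit `(h,x) ↦ εH h`
    (hAone : ∀ p : H × I,
      dorrohMulL mH mI l r (oneH, (0 : I)) p = p ∧ dorrohMulL mH mI l r p (oneH, (0 : I)) = p)
    (hAco : Coassoc (dorrohComul dH dI ρl ρr))
    (hAcounit : ∀ p : H × I,
      (TensorProduct.lid k (H × I)) (TensorProduct.map (εH ∘ₗ LinearMap.fst k H I) LinearMap.id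
        (dorrohComul dH dI ρl ρr p)) = p ∧
      (TensorProduct.rid k (H × I)) (TensorProduct.map LinearMap.id (εH ∘ₗ LinearMap.fst k H I)
        (dorrohComul dH dI ρl ρr p)) = p)
    (hAmul : ∀ p q : H × I,
      dorrohComul dH dI ρl ρr (dorrohMulL mH mI l r p q)
        = tensorMul (dorrohMulL mH mI l r) (dorrohComul dH dI ρl ρr p)
            (dorrohComul dH dI ρl ρr q))
    (hAεmul : ∀ p q : H × I, εH (dorrohMulL mH mI l r p q).1 = εH p.1 * εH q.1)
    (hAΔone : dorrohComul dH dI ρl ρr (oneH, (0 : I))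
      = (oneH, (0 : I)) ⊗ₜ[k] (oneH, (0 : I)))
    -- the comodule structures of `I` are counital
    (hρlcounit : ∀ x : I,
      (TensorProduct.lid k I) (TensorProduct.map εH LinearMap.id (ρl x)) = x)
    (hρrcounit : ∀ x : I,
      (TensorProduct.rid k I) (TensorProduct.map LinearMap.id εH (ρr x)) = x) :
    -- then `B = {a ∈ A | (1 ⊗ π_H)Δ(a) = a ⊗ 1}` equals `{(λ1_H, x) | λ ∈ k, x ∈ I^{coH}}`
    {a : H × I | TensorProduct.map LinearMap.id (LinearMap.fst k H I)
        (dorrohComul dH dI ρl ρr a) = a ⊗ₜ[k] oneH}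
      = {p : H × I | ∃ (lam : k) (x : I),
          p = (lam • oneH, x) ∧ ρr x = x ⊗ₜ[k] oneH} := by
  ext a
  obtain ⟨h, x⟩ := a
  simp only [Set.mem_setOf_eq]
  have fH : ∀ z : H ⊗[k] H,
      TensorProduct.map (LinearMap.fst k H I) LinearMap.id
        (TensorProduct.map (LinearMap.inl k H I) LinearMap.id z) = z := fun z => by
    rw [← LinearMap.comp_apply, ← TensorProduct.map_comp]; simp
  have fH0 : ∀ z : I ⊗[k] H,
      TensorProduct.map (LinearMap.fst k H I) LinearMap.id
        (TensorProduct.map (LinearMap.inr k H I) LinearMap.id z) = 0 := fun z => by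
    rw [← LinearMap.comp_apply, ← TensorProduct.map_comp]
    simp [TensorProduct.map_zero_left]
  have fI : ∀ z : I ⊗[k] H,
      TensorProduct.map (LinearMap.snd k H I) LinearMap.id
        (TensorProduct.map (LinearMap.inr k H I) LinearMap.id z) = z := fun z => by
    rw [← LinearMap.comp_apply, ← TensorProduct.map_comp]; simp
  have fI0 : ∀ z : H ⊗[k] H,
      TensorProduct.map (LinearMap.snd k H I) LinearMap.id
        (TensorProduct.map (LinearMap.inl k H I) LinearMap.id z) = 0 := fun z => by
    rw [← LinearMap.comp_apply, ← TensorProduct.map_comp]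
    simp [TensorProduct.map_zero_left]
  constructor
  · intro hcond
    rw [dorrohComul_fst_aux] at hcond
    have hHh : dH h = h ⊗ₜ[k] oneH := by
      have := congrArg (TensorProduct.map (LinearMap.fst k H I) LinearMap.id) hcond
      simpa [fH, fH0, TensorProduct.map_tmul] using this
    have hIx : ρr x = x ⊗ₜ[k] oneH := by
      have := congrArg (TensorProduct.map (LinearMap.snd k H I) LinearMap.id) hcond
      simpa [fI, fI0, TensorProduct.map_tmul] using this
    have hc := (hεcounit h).1
    rw [hHh] at hc
    simp only [TensorProduct.map_tmul, LinearMap.id_coe, id_eq, TensorProduct.lid_tmul] at hc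
    exact ⟨εH h, x, by rw [hc], hIx⟩
  · rintro ⟨lam, y, hp, hy⟩
    simp only [Prod.mk.injEq] at hp
    obtain ⟨rfl, rfl⟩ := hp
    rw [dorrohComul_fst_aux]
    rw [map_smul, hdHone, hy]
    simp only [map_smul, TensorProduct.map_tmul,
      LinearMap.inl_apply, LinearMap.inr_apply, LinearMap.id_coe, id_eq]
    rw [TensorProduct.smul_tmul', ← TensorProduct.add_tmul]
    congr 1
    simp [Prod.ext_iff]
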